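/- Deletion of grammar-redundant relational atoms: if R, uR_xv, Γ ⊢ w : A is derivable in L_Σ(𝒜) and there exists a propagation path π(u,v) in PG(R) with s_π(u,v) ∈ L_{g(𝒜)}(x), then R, Γ ⊢ w : A is derivable in L_Σ(𝒜). -/

import Mathlib

namespace IGL

/-- An alphabet Σ: a nonempty countable type of characters partitioned into a
forward part and a backward part by an involutive converse operation. -/
structure Alphabet where
  Char : Type
  nonempty : Nonempty Char
  countable : Countable Char
  fwd : Char → Prop
  conv : Char → Char
  conv_conv : ∀ x, conv (conv x) = x
  fwd_iff : ∀ x, fwd x ↔ ¬ fwd (conv x)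

/-- Formulae of the intuitionistic multi-modal language `L_Σ`. -/
inductive Formula (C : Type) : Type
  | atom : ℕ → Formula C
  | bot  : Formula C
  | or   : Formula C → Formula C → Formula C
  | and  : Formula C → Formula C → Formula C
  | imp  : Formula C → Formula C → Formula C
  | dia  : C → Formula C → Formula C
  | box  : C → Formula C → Formula C

namespace Formula
/-- Intuitionistic negation `¬A := A ⊃ ⊥`. -/
def neg {C : Type} (A : Formula C) : Formula C := A.imp Formula.bot
/-- `A ≡ B := (A ⊃ B) ∧ (B ⊃ A)`. -/
def equiv {C : Type} (A B : Formula C) : Formula C := (A.imp B).and (B.imp A)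
end Formula

/-- Bi-relational Σ-models. -/
structure BiModel (α : Alphabet) where
  W : Type
  nonempty : Nonempty W
  le : W → W → Prop
  le_refl : ∀ w, le w w
  le_trans : ∀ w u v, le w u → le u v → le w v
  R : α.Char → W → W → Prop
  F1 : ∀ x w v v', R x w v → le v v' → ∃ w', le w w' ∧ R x w' v'
  F2 : ∀ x w w' v, le w w' → R x w v → ∃ v', R x w' v' ∧ le v v'
  F3 : ∀ x w u, R x w u ↔ R (α.conv x) u w
  V : W → ℕ → Prop
  mono : ∀ w u, le w u → ∀ p, V w p → V u p

/-- Satisfaction `M,w ⊩ A`. -/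
def Sat {α : Alphabet} (M : BiModel α) : M.W → Formula α.Char → Prop
  | w, Formula.atom p => M.V w p
  | _, Formula.bot => False
  | w, Formula.or A B => Sat M w A ∨ Sat M w B
  | w, Formula.and A B => Sat M w A ∧ Sat M w B
  | w, Formula.imp A B => ∀ w', M.le w w' → Sat M w' A → Sat M w' B
  | w, Formula.dia x A => ∃ v, M.R x w v ∧ Sat M v A
  | w, Formula.box x A => ∀ w' v', M.le w w' → M.R x w' v' → Sat M v' A

/-- Axioms: seriality axioms `D_x` or intuitionistic path axioms
`(⟨x₁⟩⋯⟨xₙ⟩A ⊃ ⟨x⟩A) ∧ ([x]A ⊃ [x₁]⋯[xₙ]A)`, encoded by the character `x`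
and the string `[x₁,…,xₙ]`. -/
inductive Ax (C : Type) : Type
  | ser : C → Ax C
  | ipa : C → List C → Ax C

/-- Composition of the accessibility relations along a string. -/
def BiModel.Rs {α : Alphabet} (M : BiModel α) : List α.Char → M.W → M.W → Prop
  | [], w, u => w = u
  | x :: s, w, u => ∃ v, M.R x w v ∧ M.Rs s v u

/-- The frame condition corresponding to an axiom. -/
def SatisfiesAx {α : Alphabet} (M : BiModel α) : Ax α.Char → Prop
  | Ax.ser x => ∀ w, ∃ u, M.R x w u
  | Ax.ipa x s => ∀ w u, M.Rs s w u → M.R x w u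

/-- A bi-relational (Σ,𝒜)-model. -/
def AModel {α : Alphabet} (𝒜 : Set (Ax α.Char)) (M : BiModel α) : Prop :=
  ∀ a ∈ 𝒜, SatisfiesAx M a

/-- `⟨x₁⟩⋯⟨xₙ⟩A`. -/
def dias {C : Type} : List C → Formula C → Formula C
  | [], A => A
  | x :: s, A => Formula.dia x (dias s A)

/-- `[x₁]⋯[xₙ]A`. -/
def boxes {C : Type} : List C → Formula C → Formula C
  | [], A => A
  | x :: s, A => Formula.box x (boxes s A)

/-- The Hilbert system `H IK_m(Σ,𝒜)`. -/
inductive Hprf (α : Alphabet) (𝒜 : Set (Ax α.Char)) : Formula α.Char → Prop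
  | ipl1 (A B : Formula α.Char) : Hprf α 𝒜 (A.imp (B.imp A))
  | ipl2 (A B C : Formula α.Char) : Hprf α 𝒜 ((A.imp (B.imp C)).imp ((A.imp B).imp (A.imp C)))
  | ipl3 (A B : Formula α.Char) : Hprf α 𝒜 (A.imp (A.or B))
  | ipl4 (A B : Formula α.Char) : Hprf α 𝒜 (B.imp (A.or B))
  | ipl5 (A B C : Formula α.Char) : Hprf α 𝒜 ((A.imp C).imp ((B.imp C).imp ((A.or B).imp C)))
  | ipl6 (A B : Formula α.Char) : Hprf α 𝒜 ((A.and B).imp A)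
  | ipl7 (A B : Formula α.Char) : Hprf α 𝒜 ((A.and B).imp B)
  | ipl8 (A B : Formula α.Char) : Hprf α 𝒜 (A.imp (B.imp (A.and B)))
  | ipl9 (A : Formula α.Char) : Hprf α 𝒜 (Formula.bot.imp A)
  | axK (x : α.Char) (A B : Formula α.Char) : Hprf α 𝒜 ((Formula.box x (A.imp B)).imp ((Formula.box x A).imp (Formula.box x B)))
  | axBoxAnd (x : α.Char) (A B : Formula α.Char) : Hprf α 𝒜 ((Formula.box x (A.and B)).equiv ((Formula.box x A).and (Formula.box x B)))
  | axDiaOr (x : α.Char) (A B : Formula α.Char) : Hprf α 𝒜 ((Formula.dia x (A.or B)).equiv ((Formula.dia x A).or (Formula.dia x B)))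
  | axKdia (x : α.Char) (A B : Formula α.Char) : Hprf α 𝒜 ((Formula.box x (A.imp B)).imp ((Formula.dia x A).imp (Formula.dia x B)))
  | axBoxDia (x : α.Char) (A B : Formula α.Char) : Hprf α 𝒜 (((Formula.box x A).and (Formula.dia x B)).imp (Formula.dia x (A.and B)))
  | axNotDiaBot (x : α.Char) : Hprf α 𝒜 (Formula.dia x Formula.bot).neg
  | axConv (x : α.Char) (A : Formula α.Char) : Hprf α 𝒜 ((A.imp (Formula.box x (Formula.dia (α.conv x) A))).and
      ((Formula.dia x (Formula.box (α.conv x) A)).imp A))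
  | axFS (x : α.Char) (A B : Formula α.Char) : Hprf α 𝒜 (((Formula.dia x A).imp (Formula.box x B)).imp (Formula.box x (A.imp B)))
  | axDiaImp (x : α.Char) (A B : Formula α.Char) : Hprf α 𝒜 ((Formula.dia x (A.imp B)).imp ((Formula.box x A).imp (Formula.dia x B)))
  | axSer (x : α.Char) (A : Formula α.Char) (h : Ax.ser x ∈ 𝒜) : Hprf α 𝒜 ((Formula.box x A).imp (Formula.dia x A))
  | axIpa (x : α.Char) (s : List α.Char) (A : Formula α.Char) (h : Ax.ipa x s ∈ 𝒜) :
      Hprf α 𝒜 (((dias s A).imp (Formula.dia x A)).and ((Formula.box x A).imp (boxes s A)))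
  | mp (A B : Formula α.Char) : Hprf α 𝒜 (A.imp B) → Hprf α 𝒜 A → Hprf α 𝒜 B
  | nec (x : α.Char) (A : Formula α.Char) : Hprf α 𝒜 A → Hprf α 𝒜 (Formula.box x A)

/-- `B₁ ∧ ⋯ ∧ Bₙ` (left-nested). -/
def conjList {C : Type} : Formula C → List (Formula C) → Formula C
  | A, [] => A
  | A, B :: L => conjList (A.and B) L

/-- `𝒮 ⊢_𝒜 A`: either `A ∈ IK_m(Σ,𝒜)` or `B₁∧⋯∧Bₙ ⊃ A ∈ IK_m(Σ,𝒜)` for some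
`B₁,…,Bₙ ∈ 𝒮`. -/
def HderivFrom (α : Alphabet) (𝒜 : Set (Ax α.Char)) (S : Set (Formula α.Char))
    (A : Formula α.Char) : Prop :=
  Hprf α 𝒜 A ∨ ∃ B L, B ∈ S ∧ (∀ D ∈ L, D ∈ S) ∧ Hprf α 𝒜 ((conjList B L).imp A)

/-! ### Labeled sequents -/

/-- A relational atom `w R_x u`. -/
abbrev Rel (C : Type) := ℕ × C × ℕ
/-- A labeled formula `w : A`. -/
abbrev LF (C : Type) := ℕ × Formula C

def relLabels {C : Type} (R : Multiset (Rel C)) : Set ℕ :=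
  {l | ∃ a ∈ R, a.1 = l ∨ a.2.2 = l}

def lfLabels {C : Type} (Γ : Multiset (LF C)) : Set ℕ :=
  {l | ∃ b ∈ Γ, b.1 = l}

/-- `u` is fresh with respect to the sequent `R, Γ ⊢ v : ⋯`. -/
def freshIn {C : Type} (u : ℕ) (R : Multiset (Rel C)) (Γ : Multiset (LF C)) (v : ℕ) : Prop :=
  u ∉ relLabels R ∧ u ∉ lfLabels Γ ∧ u ≠ v

/-- `Chain s w u m`: the multiset `m` is a chain of relational atoms `w R_s u`
along the string `s` (with `w = u` and `m = 0` when `s = ε`). -/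
inductive Chain {C : Type} : List C → ℕ → ℕ → Multiset (Rel C) → Prop
  | nil (w : ℕ) : Chain [] w w 0
  | cons {x : C} {s : List C} {w v u : ℕ} {m : Multiset (Rel C)} :
      Chain s v u m → Chain (x :: s) w u ((w, x, v) ::ₘ m)

/-- The labeled calculus `L_Σ(𝒜)`, height-indexed: `LD α 𝒜 n R Γ w A` states
that the labeled sequent `R, Γ ⊢ w : A` has a proof of height at most `n`. -/
inductive LD (α : Alphabet) (𝒜 : Set (Ax α.Char)) :
    ℕ → Multiset (Rel α.Char) → Multiset (LF α.Char) → ℕ → Formula α.Char → Prop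
  | id (n : ℕ) (R : Multiset (Rel α.Char)) (Γ : Multiset (LF α.Char)) (w p : ℕ) : LD α 𝒜 n R ((w, Formula.atom p) ::ₘ Γ) w (Formula.atom p)
  | botL (n : ℕ) (R : Multiset (Rel α.Char)) (Γ : Multiset (LF α.Char)) (w u : ℕ) (A : Formula α.Char) : LD α 𝒜 n R ((w, Formula.bot) ::ₘ Γ) u A
  | orL {n : ℕ} {R : Multiset (Rel α.Char)} {Γ : Multiset (LF α.Char)} {w u : ℕ} {A B C : Formula α.Char} :
      LD α 𝒜 n R ((w, A) ::ₘ Γ) u C → LD α 𝒜 n R ((w, B) ::ₘ Γ) u C →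
      LD α 𝒜 (n + 1) R ((w, A.or B) ::ₘ Γ) u C
  | orR1 {n : ℕ} {R : Multiset (Rel α.Char)} {Γ : Multiset (LF α.Char)} {w : ℕ} {A B : Formula α.Char} : LD α 𝒜 n R Γ w A → LD α 𝒜 (n + 1) R Γ w (A.or B)
  | orR2 {n : ℕ} {R : Multiset (Rel α.Char)} {Γ : Multiset (LF α.Char)} {w : ℕ} {A B : Formula α.Char} : LD α 𝒜 n R Γ w B → LD α 𝒜 (n + 1) R Γ w (A.or B)
  | andL {n : ℕ} {R : Multiset (Rel α.Char)} {Γ : Multiset (LF α.Char)} {w u : ℕ} {A B C : Formula α.Char} :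
      LD α 𝒜 n R ((w, A) ::ₘ (w, B) ::ₘ Γ) u C →
      LD α 𝒜 (n + 1) R ((w, A.and B) ::ₘ Γ) u C
  | andR {n : ℕ} {R : Multiset (Rel α.Char)} {Γ : Multiset (LF α.Char)} {w : ℕ} {A B : Formula α.Char} :
      LD α 𝒜 n R Γ w A → LD α 𝒜 n R Γ w B → LD α 𝒜 (n + 1) R Γ w (A.and B)
  | impL {n : ℕ} {R : Multiset (Rel α.Char)} {Γ : Multiset (LF α.Char)} {w u : ℕ} {A B C : Formula α.Char} :
      LD α 𝒜 n R ((w, A.imp B) ::ₘ Γ) w A → LD α 𝒜 n R ((w, B) ::ₘ Γ) u C →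
      LD α 𝒜 (n + 1) R ((w, A.imp B) ::ₘ Γ) u C
  | impR {n : ℕ} {R : Multiset (Rel α.Char)} {Γ : Multiset (LF α.Char)} {w : ℕ} {A B : Formula α.Char} :
      LD α 𝒜 n R ((w, A) ::ₘ Γ) w B → LD α 𝒜 (n + 1) R Γ w (A.imp B)
  | diaL {n : ℕ} {R : Multiset (Rel α.Char)} {Γ : Multiset (LF α.Char)} {w u v : ℕ} {x : α.Char} {A B : Formula α.Char} (hf : freshIn u R ((w, Formula.dia x A) ::ₘ Γ) v) :
      LD α 𝒜 n ((w, x, u) ::ₘ R) ((u, A) ::ₘ Γ) v B →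
      LD α 𝒜 (n + 1) R ((w, Formula.dia x A) ::ₘ Γ) v B
  | diaR {n : ℕ} {R : Multiset (Rel α.Char)} {Γ : Multiset (LF α.Char)} {w u : ℕ} {x : α.Char} {A : Formula α.Char} :
      LD α 𝒜 n ((w, x, u) ::ₘ R) Γ u A →
      LD α 𝒜 (n + 1) ((w, x, u) ::ₘ R) Γ w (Formula.dia x A)
  | boxR {n : ℕ} {R : Multiset (Rel α.Char)} {Γ : Multiset (LF α.Char)} {w u : ℕ} {x : α.Char} {A : Formula α.Char} (hf : freshIn u R Γ w) :
      LD α 𝒜 n ((w, x, u) ::ₘ R) Γ u A → LD α 𝒜 (n + 1) R Γ w (Formula.box x A)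
  | boxL {n : ℕ} {R : Multiset (Rel α.Char)} {Γ : Multiset (LF α.Char)} {w u v : ℕ} {x : α.Char} {A C : Formula α.Char} :
      LD α 𝒜 n ((w, x, u) ::ₘ R) ((w, Formula.box x A) ::ₘ (u, A) ::ₘ Γ) v C →
      LD α 𝒜 (n + 1) ((w, x, u) ::ₘ R) ((w, Formula.box x A) ::ₘ Γ) v C
  | dx {n : ℕ} {R : Multiset (Rel α.Char)} {Γ : Multiset (LF α.Char)} {u v : ℕ} {x : α.Char} {A : Formula α.Char} (w : ℕ) (hax : Ax.ser x ∈ 𝒜) (hf : freshIn u R Γ v) :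
      LD α 𝒜 n ((w, x, u) ::ₘ R) Γ v A → LD α 𝒜 (n + 1) R Γ v A
  | isx {n : ℕ} {R : Multiset (Rel α.Char)} {Γ : Multiset (LF α.Char)} {w u v : ℕ} {s : List α.Char} {x : α.Char} {m : Multiset (Rel α.Char)} {A : Formula α.Char} (hax : Ax.ipa x s ∈ 𝒜) (hc : Chain s w u m) :
      LD α 𝒜 n ((w, x, u) ::ₘ (m + R)) Γ v A → LD α 𝒜 (n + 1) (m + R) Γ v A
  | cx {n : ℕ} {R : Multiset (Rel α.Char)} {Γ : Multiset (LF α.Char)} {w u v : ℕ} {x : α.Char} {A : Formula α.Char} :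
      LD α 𝒜 n ((w, x, u) ::ₘ (u, α.conv x, w) ::ₘ R) Γ v A →
      LD α 𝒜 (n + 1) ((w, x, u) ::ₘ R) Γ v A

/-- Derivability in `L_Σ(𝒜)`. -/
def LDeriv (α : Alphabet) (𝒜 : Set (Ax α.Char)) (R : Multiset (Rel α.Char))
    (Γ : Multiset (LF α.Char)) (w : ℕ) (A : Formula α.Char) : Prop :=
  ∃ n, LD α 𝒜 n R Γ w A

/-- (Σ,𝒜)-validity of a labeled sequent. -/
def SeqValid (α : Alphabet) (𝒜 : Set (Ax α.Char)) (R : Multiset (Rel α.Char))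
    (Γ : Multiset (LF α.Char)) (w : ℕ) (A : Formula α.Char) : Prop :=
  ∀ (M : BiModel α), AModel 𝒜 M → ∀ I : ℕ → M.W,
    (∀ a ∈ R, M.R a.2.1 (I a.1) (I a.2.2)) → (∀ b ∈ Γ, Sat M (I b.1) b.2) →
      Sat M (I w) A

/-! ### Grammars and propagation -/

/-- Converse of a string: `s̄ = x̄ₙ⋯x̄₁` for `s = x₁⋯xₙ`. -/
def convStr {C : Type} (cv : C → C) (s : List C) : List C := (s.map cv).reverse

/-- The 𝒜-grammar `g(𝒜)`. -/
def Gram (α : Alphabet) (𝒜 : Set (Ax α.Char)) : Set (α.Char × List α.Char) :=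
  {p | Ax.ipa p.1 p.2 ∈ 𝒜 ∨
        ∃ x s, Ax.ipa x s ∈ 𝒜 ∧ p.1 = α.conv x ∧ p.2 = convStr α.conv s}

/-- One-step derivation between strings in a grammar. -/
def Step {C : Type} (g : Set (C × List C)) (s t : List C) : Prop :=
  ∃ s₁ s₂ x r, (x, r) ∈ g ∧ s = s₁ ++ x :: s₂ ∧ t = s₁ ++ r ++ s₂

/-- The language of the character `x` relative to a grammar. -/
def Lang {C : Type} (g : Set (C × List C)) (x : C) : Set (List C) :=
  {t | Relation.ReflTransGen (Step g) [x] t}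

/-- An edge of the propagation graph `PG(R)`. -/
def PGEdge (α : Alphabet) (R : Multiset (Rel α.Char)) (a : ℕ) (x : α.Char) (b : ℕ) : Prop :=
  (a, x, b) ∈ R ∨ (b, α.conv x, a) ∈ R

/-- `PPath α R w u s`: there is a propagation path from `w` to `u` in `PG(R)`
whose string is `s`. -/
inductive PPath (α : Alphabet) (R : Multiset (Rel α.Char)) : ℕ → ℕ → List α.Char → Prop
  | nil (w : ℕ) : PPath α R w w []
  | cons {w v u : ℕ} {x : α.Char} {s : List α.Char} :
      PGEdge α R w x v → PPath α R v u s → PPath α R w u (x :: s)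

/-- Side condition of the propagation rules: there exists a propagation path
`π(w,u)` in `PG(R)` with `s_π(w,u) ∈ L_{g(𝒜)}(x)`. -/
def CanProp (α : Alphabet) (𝒜 : Set (Ax α.Char)) (R : Multiset (Rel α.Char))
    (w u : ℕ) (x : α.Char) : Prop :=
  ∃ s, PPath α R w u s ∧ s ∈ Lang (Gram α 𝒜) x

/-- The refined labeled calculus `L*_Σ(𝒜)`, height-indexed. -/
inductive LDs (α : Alphabet) (𝒜 : Set (Ax α.Char)) :
    ℕ → Multiset (Rel α.Char) → Multiset (LF α.Char) → ℕ → Formula α.Char → Prop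
  | id (n : ℕ) (R : Multiset (Rel α.Char)) (Γ : Multiset (LF α.Char)) (w p : ℕ) : LDs α 𝒜 n R ((w, Formula.atom p) ::ₘ Γ) w (Formula.atom p)
  | botL (n : ℕ) (R : Multiset (Rel α.Char)) (Γ : Multiset (LF α.Char)) (w u : ℕ) (A : Formula α.Char) : LDs α 𝒜 n R ((w, Formula.bot) ::ₘ Γ) u A
  | orL {n : ℕ} {R : Multiset (Rel α.Char)} {Γ : Multiset (LF α.Char)} {w u : ℕ} {A B C : Formula α.Char} :
      LDs α 𝒜 n R ((w, A) ::ₘ Γ) u C → LDs α 𝒜 n R ((w, B) ::ₘ Γ) u C →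
      LDs α 𝒜 (n + 1) R ((w, A.or B) ::ₘ Γ) u C
  | orR1 {n : ℕ} {R : Multiset (Rel α.Char)} {Γ : Multiset (LF α.Char)} {w : ℕ} {A B : Formula α.Char} : LDs α 𝒜 n R Γ w A → LDs α 𝒜 (n + 1) R Γ w (A.or B)
  | orR2 {n : ℕ} {R : Multiset (Rel α.Char)} {Γ : Multiset (LF α.Char)} {w : ℕ} {A B : Formula α.Char} : LDs α 𝒜 n R Γ w B → LDs α 𝒜 (n + 1) R Γ w (A.or B)
  | andL {n : ℕ} {R : Multiset (Rel α.Char)} {Γ : Multiset (LF α.Char)} {w u : ℕ} {A B C : Formula α.Char} :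
      LDs α 𝒜 n R ((w, A) ::ₘ (w, B) ::ₘ Γ) u C →
      LDs α 𝒜 (n + 1) R ((w, A.and B) ::ₘ Γ) u C
  | andR {n : ℕ} {R : Multiset (Rel α.Char)} {Γ : Multiset (LF α.Char)} {w : ℕ} {A B : Formula α.Char} :
      LDs α 𝒜 n R Γ w A → LDs α 𝒜 n R Γ w B → LDs α 𝒜 (n + 1) R Γ w (A.and B)
  | impL {n : ℕ} {R : Multiset (Rel α.Char)} {Γ : Multiset (LF α.Char)} {w u : ℕ} {A B C : Formula α.Char} :
      LDs α 𝒜 n R ((w, A.imp B) ::ₘ Γ) w A → LDs α 𝒜 n R ((w, B) ::ₘ Γ) u C →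
      LDs α 𝒜 (n + 1) R ((w, A.imp B) ::ₘ Γ) u C
  | impR {n : ℕ} {R : Multiset (Rel α.Char)} {Γ : Multiset (LF α.Char)} {w : ℕ} {A B : Formula α.Char} :
      LDs α 𝒜 n R ((w, A) ::ₘ Γ) w B → LDs α 𝒜 (n + 1) R Γ w (A.imp B)
  | diaL {n : ℕ} {R : Multiset (Rel α.Char)} {Γ : Multiset (LF α.Char)} {w u v : ℕ} {x : α.Char} {A B : Formula α.Char} (hf : freshIn u R ((w, Formula.dia x A) ::ₘ Γ) v) :
      LDs α 𝒜 n ((w, x, u) ::ₘ R) ((u, A) ::ₘ Γ) v B →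
      LDs α 𝒜 (n + 1) R ((w, Formula.dia x A) ::ₘ Γ) v B
  | boxR {n : ℕ} {R : Multiset (Rel α.Char)} {Γ : Multiset (LF α.Char)} {w u : ℕ} {x : α.Char} {A : Formula α.Char} (hf : freshIn u R Γ w) :
      LDs α 𝒜 n ((w, x, u) ::ₘ R) Γ u A → LDs α 𝒜 (n + 1) R Γ w (Formula.box x A)
  | dx {n : ℕ} {R : Multiset (Rel α.Char)} {Γ : Multiset (LF α.Char)} {u v : ℕ} {x : α.Char} {A : Formula α.Char} (w : ℕ) (hax : Ax.ser x ∈ 𝒜) (hf : freshIn u R Γ v) :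
      LDs α 𝒜 n ((w, x, u) ::ₘ R) Γ v A → LDs α 𝒜 (n + 1) R Γ v A
  | pdia {n : ℕ} {R : Multiset (Rel α.Char)} {Γ : Multiset (LF α.Char)} {u : ℕ} {x : α.Char} {A : Formula α.Char} (w : ℕ) (h : CanProp α 𝒜 R w u x) :
      LDs α 𝒜 n R Γ u A → LDs α 𝒜 (n + 1) R Γ w (Formula.dia x A)
  | pbox {n : ℕ} {R : Multiset (Rel α.Char)} {Γ : Multiset (LF α.Char)} {w u v : ℕ} {x : α.Char} {A B : Formula α.Char} (h : CanProp α 𝒜 R w u x) :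
      LDs α 𝒜 n R ((w, Formula.box x A) ::ₘ (u, A) ::ₘ Γ) v B →
      LDs α 𝒜 (n + 1) R ((w, Formula.box x A) ::ₘ Γ) v B

/-- Derivability in `L*_Σ(𝒜)`. -/
def LDerivS (α : Alphabet) (𝒜 : Set (Ax α.Char)) (R : Multiset (Rel α.Char))
    (Γ : Multiset (LF α.Char)) (w : ℕ) (A : Formula α.Char) : Prop :=
  ∃ n, LDs α 𝒜 n R Γ w A

/-! ### Label substitutions -/

/-- `subL v u l`: replace the label `v` by `u`. -/
def subL (v u l : ℕ) : ℕ := if l = v then u else l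

def subR {C : Type} (v u : ℕ) (R : Multiset (Rel C)) : Multiset (Rel C) :=
  R.map (fun a => (subL v u a.1, a.2.1, subL v u a.2.2))

def subG {C : Type} (v u : ℕ) (Γ : Multiset (LF C)) : Multiset (LF C) :=
  Γ.map (fun b => (subL v u b.1, b.2))

/-! ### Double-negation translations -/

/-- The double-negation translation on `L_Σ`. -/
def dnt {C : Type} : Formula C → Formula C
  | Formula.atom p => ((Formula.atom p).neg).neg
  | Formula.bot => ((Formula.bot : Formula C).neg).neg
  | Formula.or A B => (((dnt A).neg).and ((dnt B).neg)).neg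
  | Formula.and A B => (dnt A).and (dnt B)
  | Formula.imp A B => (dnt A).imp (dnt B)
  | Formula.dia x A => (Formula.box x ((dnt A).neg)).neg
  | Formula.box x A => Formula.box x (dnt A)

/-! ### The classical language and calculi -/

/-- Formulae of the classical language `L^C_Σ` (negation normal form). -/
inductive CForm (C : Type) : Type
  | pos : ℕ → CForm C
  | neg : ℕ → CForm C
  | or  : CForm C → CForm C → CForm C
  | and : CForm C → CForm C → CForm C
  | dia : C → CForm C → CForm C
  | box : C → CForm C → CForm C

/-- Classical negation, recursively extended to all formulae of `L^C_Σ`. -/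
def cneg {C : Type} : CForm C → CForm C
  | CForm.pos p => CForm.neg p
  | CForm.neg p => CForm.pos p
  | CForm.or A B => CForm.and (cneg A) (cneg B)
  | CForm.and A B => CForm.or (cneg A) (cneg B)
  | CForm.dia x A => CForm.box x (cneg A)
  | CForm.box x A => CForm.dia x (cneg A)

/-- `⊥ := p ∧ ¬p` for a fixed propositional atom. -/
def cbot {C : Type} : CForm C := CForm.and (CForm.pos 0) (CForm.neg 0)

/-- `A ⊃ B := ¬A ∨ B`. -/
def cimp {C : Type} (A B : CForm C) : CForm C := CForm.or (cneg A) B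

/-- Reading a formula of `L_Σ` as a formula of `L^C_Σ`. -/
def toC {C : Type} : Formula C → CForm C
  | Formula.atom p => CForm.pos p
  | Formula.bot => cbot
  | Formula.or A B => CForm.or (toC A) (toC B)
  | Formula.and A B => CForm.and (toC A) (toC B)
  | Formula.imp A B => cimp (toC A) (toC B)
  | Formula.dia x A => CForm.dia x (toC A)
  | Formula.box x A => CForm.box x (toC A)

/-- A classical labeled formula. -/
abbrev CLF (C : Type) := ℕ × CForm C

def clfLabels {C : Type} (Γ : Multiset (CLF C)) : Set ℕ :=
  {l | ∃ b ∈ Γ, b.1 = l}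

/-- The refined labeled calculus `L^C_Σ(𝒜)` for the corresponding classical
grammar logic, operating on one-sided sequents `R ⊢ Γ`. -/
inductive CLD (α : Alphabet) (𝒜 : Set (Ax α.Char)) :
    Multiset (Rel α.Char) → Multiset (CLF α.Char) → Prop
  | id (R : Multiset (Rel α.Char)) (Γ : Multiset (CLF α.Char)) (w p : ℕ) :
      CLD α 𝒜 R ((w, CForm.pos p) ::ₘ (w, CForm.neg p) ::ₘ Γ)
  | orR {R : Multiset (Rel α.Char)} {Γ : Multiset (CLF α.Char)} {w : ℕ}
      {A B : CForm α.Char} :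
      CLD α 𝒜 R ((w, A) ::ₘ (w, B) ::ₘ Γ) → CLD α 𝒜 R ((w, CForm.or A B) ::ₘ Γ)
  | andR {R : Multiset (Rel α.Char)} {Γ : Multiset (CLF α.Char)} {w : ℕ}
      {A B : CForm α.Char} :
      CLD α 𝒜 R ((w, A) ::ₘ Γ) → CLD α 𝒜 R ((w, B) ::ₘ Γ) →
      CLD α 𝒜 R ((w, CForm.and A B) ::ₘ Γ)
  | boxR {R : Multiset (Rel α.Char)} {Γ : Multiset (CLF α.Char)} {w u : ℕ}
      {x : α.Char} {A : CForm α.Char}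
      (hf : u ∉ relLabels R ∧ u ∉ clfLabels ((w, CForm.box x A) ::ₘ Γ)) :
      CLD α 𝒜 ((w, x, u) ::ₘ R) ((u, A) ::ₘ Γ) →
      CLD α 𝒜 R ((w, CForm.box x A) ::ₘ Γ)
  | dx {R : Multiset (Rel α.Char)} {Γ : Multiset (CLF α.Char)} {u : ℕ}
      {x : α.Char} (w : ℕ) (hax : Ax.ser x ∈ 𝒜)
      (hf : u ∉ relLabels R ∧ u ∉ clfLabels Γ) :
      CLD α 𝒜 ((w, x, u) ::ₘ R) Γ → CLD α 𝒜 R Γ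
  | diaR {R : Multiset (Rel α.Char)} {Γ : Multiset (CLF α.Char)} {w u : ℕ}
      {x : α.Char} {A : CForm α.Char} (h : CanProp α 𝒜 R w u x) :
      CLD α 𝒜 R ((w, CForm.dia x A) ::ₘ (u, A) ::ₘ Γ) →
      CLD α 𝒜 R ((w, CForm.dia x A) ::ₘ Γ)

/-- `⟨x₁⟩⋯⟨xₙ⟩A` in the classical language. -/
def cdias {C : Type} : List C → CForm C → CForm C
  | [], A => A
  | x :: s, A => CForm.dia x (cdias s A)

/-- The Hilbert system for the classical grammar logic `K_m(Σ,𝒜')` corresponding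
to `IK_m(Σ,𝒜)`: seriality axioms of `𝒜` are kept and each intuitionistic path
axiom contributes the path axiom `⟨x₁⟩⋯⟨xₙ⟩A ⊃ ⟨x⟩A`. -/
inductive Kprf (α : Alphabet) (𝒜 : Set (Ax α.Char)) : CForm α.Char → Prop
  | cpl1 (A B : CForm α.Char) : Kprf α 𝒜 (cimp A (cimp B A))
  | cpl2 (A B C : CForm α.Char) :
      Kprf α 𝒜 (cimp (cimp A (cimp B C)) (cimp (cimp A B) (cimp A C)))
  | cpl3 (A B : CForm α.Char) : Kprf α 𝒜 (cimp A (CForm.or A B))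
  | cpl4 (A B : CForm α.Char) : Kprf α 𝒜 (cimp B (CForm.or A B))
  | cpl5 (A B C : CForm α.Char) :
      Kprf α 𝒜 (cimp (cimp A C) (cimp (cimp B C) (cimp (CForm.or A B) C)))
  | cpl6 (A B : CForm α.Char) : Kprf α 𝒜 (cimp (CForm.and A B) A)
  | cpl7 (A B : CForm α.Char) : Kprf α 𝒜 (cimp (CForm.and A B) B)
  | cpl8 (A B : CForm α.Char) : Kprf α 𝒜 (cimp A (cimp B (CForm.and A B)))
  | cpl9 (A : CForm α.Char) : Kprf α 𝒜 (cimp cbot A)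
  | cpl10 (A : CForm α.Char) : Kprf α 𝒜 (CForm.or A (cneg A))
  | axK (x : α.Char) (A B : CForm α.Char) :
      Kprf α 𝒜 (cimp (CForm.box x (cimp A B)) (cimp (CForm.box x A) (CForm.box x B)))
  | axConv (x : α.Char) (A : CForm α.Char) :
      Kprf α 𝒜 (cimp A (CForm.box x (CForm.dia (α.conv x) A)))
  | axSer (x : α.Char) (A : CForm α.Char) (h : Ax.ser x ∈ 𝒜) :
      Kprf α 𝒜 (cimp (CForm.box x A) (CForm.dia x A))
  | axPath (x : α.Char) (s : List α.Char) (A : CForm α.Char) (h : Ax.ipa x s ∈ 𝒜) :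
      Kprf α 𝒜 (cimp (cdias s A) (CForm.dia x A))
  | mp (A B : CForm α.Char) : Kprf α 𝒜 (cimp A B) → Kprf α 𝒜 A → Kprf α 𝒜 B
  | nec (x : α.Char) (A : CForm α.Char) : Kprf α 𝒜 A → Kprf α 𝒜 (CForm.box x A)

/-- The double-negation translation from `L^C_Σ` into `L_Σ`. -/
def dntC {C : Type} : CForm C → Formula C
  | CForm.pos p => ((Formula.atom p).neg).neg
  | CForm.neg p => (((Formula.atom p).neg).neg).neg
  | CForm.or A B => (((dntC A).neg).and ((dntC B).neg)).neg
  | CForm.and A B => (dntC A).and (dntC B)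
  | CForm.dia x A => (Formula.box x ((dntC A).neg)).neg
  | CForm.box x A => Formula.box x (dntC A)

/-! ### Labeled tree sequents and derivation trees -/

/-- Reachability along the relational atoms of `R`. -/
def Reach {C : Type} (R : Multiset (Rel C)) (a b : ℕ) : Prop :=
  Relation.ReflTransGen (fun p q => ∃ x, (p, x, q) ∈ R) a b

/-- `R, Γ ⊢ w : ⋯` is a labeled tree sequent with root `r`. -/
def isTreeSeqRoot (α : Alphabet) (R : Multiset (Rel α.Char))
    (Γ : Multiset (LF α.Char)) (w r : ℕ) : Prop :=
  (R = 0 → r = w ∧ ∀ b ∈ Γ, b.1 = w) ∧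
  (R ≠ 0 →
    (∀ a ∈ R, a.2.2 ≠ r) ∧
    (∀ l : ℕ, l ≠ r → (R.filter (fun a => a.2.2 = l)).card ≤ 1) ∧
    (∀ l ∈ relLabels R, Reach R r l) ∧
    (∀ b ∈ Γ, b.1 ∈ relLabels R) ∧ w ∈ relLabels R)

/-- Proof trees (derivations) in the refined labeled calculus `L*_Σ(𝒜)`. -/
inductive DTree (α : Alphabet) (𝒜 : Set (Ax α.Char)) :
    Multiset (Rel α.Char) → Multiset (LF α.Char) → ℕ → Formula α.Char → Type
  | id (R : Multiset (Rel α.Char)) (Γ : Multiset (LF α.Char)) (w p : ℕ) :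
      DTree α 𝒜 R ((w, Formula.atom p) ::ₘ Γ) w (Formula.atom p)
  | botL (R : Multiset (Rel α.Char)) (Γ : Multiset (LF α.Char)) (w u : ℕ)
      (A : Formula α.Char) : DTree α 𝒜 R ((w, Formula.bot) ::ₘ Γ) u A
  | orL (R : Multiset (Rel α.Char)) (Γ : Multiset (LF α.Char)) (w u : ℕ)
      (A B C : Formula α.Char) :
      DTree α 𝒜 R ((w, A) ::ₘ Γ) u C → DTree α 𝒜 R ((w, B) ::ₘ Γ) u C →
      DTree α 𝒜 R ((w, A.or B) ::ₘ Γ) u C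
  | orR1 (R : Multiset (Rel α.Char)) (Γ : Multiset (LF α.Char)) (w : ℕ)
      (A B : Formula α.Char) : DTree α 𝒜 R Γ w A → DTree α 𝒜 R Γ w (A.or B)
  | orR2 (R : Multiset (Rel α.Char)) (Γ : Multiset (LF α.Char)) (w : ℕ)
      (A B : Formula α.Char) : DTree α 𝒜 R Γ w B → DTree α 𝒜 R Γ w (A.or B)
  | andL (R : Multiset (Rel α.Char)) (Γ : Multiset (LF α.Char)) (w u : ℕ)
      (A B C : Formula α.Char) :
      DTree α 𝒜 R ((w, A) ::ₘ (w, B) ::ₘ Γ) u C →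
      DTree α 𝒜 R ((w, A.and B) ::ₘ Γ) u C
  | andR (R : Multiset (Rel α.Char)) (Γ : Multiset (LF α.Char)) (w : ℕ)
      (A B : Formula α.Char) :
      DTree α 𝒜 R Γ w A → DTree α 𝒜 R Γ w B → DTree α 𝒜 R Γ w (A.and B)
  | impL (R : Multiset (Rel α.Char)) (Γ : Multiset (LF α.Char)) (w u : ℕ)
      (A B C : Formula α.Char) :
      DTree α 𝒜 R ((w, A.imp B) ::ₘ Γ) w A → DTree α 𝒜 R ((w, B) ::ₘ Γ) u C →
      DTree α 𝒜 R ((w, A.imp B) ::ₘ Γ) u C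
  | impR (R : Multiset (Rel α.Char)) (Γ : Multiset (LF α.Char)) (w : ℕ)
      (A B : Formula α.Char) :
      DTree α 𝒜 R ((w, A) ::ₘ Γ) w B → DTree α 𝒜 R Γ w (A.imp B)
  | diaL (R : Multiset (Rel α.Char)) (Γ : Multiset (LF α.Char)) (w u v : ℕ)
      (x : α.Char) (A B : Formula α.Char)
      (hf : freshIn u R ((w, Formula.dia x A) ::ₘ Γ) v) :
      DTree α 𝒜 ((w, x, u) ::ₘ R) ((u, A) ::ₘ Γ) v B →
      DTree α 𝒜 R ((w, Formula.dia x A) ::ₘ Γ) v B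
  | boxR (R : Multiset (Rel α.Char)) (Γ : Multiset (LF α.Char)) (w u : ℕ)
      (x : α.Char) (A : Formula α.Char) (hf : freshIn u R Γ w) :
      DTree α 𝒜 ((w, x, u) ::ₘ R) Γ u A → DTree α 𝒜 R Γ w (Formula.box x A)
  | dx (R : Multiset (Rel α.Char)) (Γ : Multiset (LF α.Char)) (w u v : ℕ)
      (x : α.Char) (A : Formula α.Char) (hax : Ax.ser x ∈ 𝒜)
      (hf : freshIn u R Γ v) :
      DTree α 𝒜 ((w, x, u) ::ₘ R) Γ v A → DTree α 𝒜 R Γ v A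
  | pdia (R : Multiset (Rel α.Char)) (Γ : Multiset (LF α.Char)) (w u : ℕ)
      (x : α.Char) (A : Formula α.Char) (h : CanProp α 𝒜 R w u x) :
      DTree α 𝒜 R Γ u A → DTree α 𝒜 R Γ w (Formula.dia x A)
  | pbox (R : Multiset (Rel α.Char)) (Γ : Multiset (LF α.Char)) (w u v : ℕ)
      (x : α.Char) (A B : Formula α.Char) (h : CanProp α 𝒜 R w u x) :
      DTree α 𝒜 R ((w, Formula.box x A) ::ₘ (u, A) ::ₘ Γ) v B →
      DTree α 𝒜 R ((w, Formula.box x A) ::ₘ Γ) v B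

/-- `EverySeq P d`: every labeled sequent occurring in the derivation `d`
satisfies `P`. -/
def EverySeq {α : Alphabet} {𝒜 : Set (Ax α.Char)}
    (P : Multiset (Rel α.Char) → Multiset (LF α.Char) → ℕ → Formula α.Char → Prop) :
    ∀ {R : Multiset (Rel α.Char)} {Γ : Multiset (LF α.Char)} {w : ℕ}
      {A : Formula α.Char}, DTree α 𝒜 R Γ w A → Prop
  | _, _, _, _, DTree.id R Γ w p => P R ((w, Formula.atom p) ::ₘ Γ) w (Formula.atom p)
  | _, _, _, _, DTree.botL R Γ w u A => P R ((w, Formula.bot) ::ₘ Γ) u A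
  | _, _, _, _, DTree.orL R Γ w u A B C d1 d2 =>
      P R ((w, A.or B) ::ₘ Γ) u C ∧ EverySeq P d1 ∧ EverySeq P d2
  | _, _, _, _, DTree.orR1 R Γ w A B d => P R Γ w (A.or B) ∧ EverySeq P d
  | _, _, _, _, DTree.orR2 R Γ w A B d => P R Γ w (A.or B) ∧ EverySeq P d
  | _, _, _, _, DTree.andL R Γ w u A B C d =>
      P R ((w, A.and B) ::ₘ Γ) u C ∧ EverySeq P d
  | _, _, _, _, DTree.andR R Γ w A B d1 d2 =>
      P R Γ w (A.and B) ∧ EverySeq P d1 ∧ EverySeq P d2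
  | _, _, _, _, DTree.impL R Γ w u A B C d1 d2 =>
      P R ((w, A.imp B) ::ₘ Γ) u C ∧ EverySeq P d1 ∧ EverySeq P d2
  | _, _, _, _, DTree.impR R Γ w A B d => P R Γ w (A.imp B) ∧ EverySeq P d
  | _, _, _, _, DTree.diaL R Γ w u v x A B _ d =>
      P R ((w, Formula.dia x A) ::ₘ Γ) v B ∧ EverySeq P d
  | _, _, _, _, DTree.boxR R Γ w u x A _ d =>
      P R Γ w (Formula.box x A) ∧ EverySeq P d
  | _, _, _, _, DTree.dx R Γ w u v x A _ _ d => P R Γ v A ∧ EverySeq P d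
  | _, _, _, _, DTree.pdia R Γ w u x A _ d =>
      P R Γ w (Formula.dia x A) ∧ EverySeq P d
  | _, _, _, _, DTree.pbox R Γ w u v x A B _ d =>
      P R ((w, Formula.box x A) ::ₘ Γ) v B ∧ EverySeq P d

/-! ### Auxiliary lemmas for deletion of grammar-redundant atoms -/

section DeletionAux

variable {α : Alphabet} {𝒜 : Set (Ax α.Char)}

/-- A bound on labels occurring in a multiset of relational atoms. -/
def rmax {C : Type} (R : Multiset (Rel C)) : ℕ := (R.map (fun a => a.1 + a.2.2)).sum

/-- A bound on labels occurring in a multiset of labeled formulae. -/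
def gmax {C : Type} (Γ : Multiset (LF C)) : ℕ := (Γ.map Prod.fst).sum

lemma relLabels_bound {C : Type} {R : Multiset (Rel C)} {l : ℕ}
    (h : l ∈ relLabels R) : l ≤ rmax R := by
  obtain ⟨a, ha, hl⟩ := h
  have h2 : a.1 + a.2.2 ≤ rmax R :=
    Multiset.single_le_sum (fun x _ => Nat.zero_le x) _ (Multiset.mem_map_of_mem _ ha)
  rcases hl with h | h <;> omega

lemma lfLabels_bound {C : Type} {Γ : Multiset (LF C)} {l : ℕ}
    (h : l ∈ lfLabels Γ) : l ≤ gmax Γ := by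
  obtain ⟨b, hb, hl⟩ := h
  have h2 : b.1 ≤ gmax Γ :=
    Multiset.single_le_sum (fun x _ => Nat.zero_le x) _ (Multiset.mem_map_of_mem _ hb)
  omega

lemma lfLabels_cons {C : Type} {p : LF C} {Γ : Multiset (LF C)} {l : ℕ} :
    l ∈ lfLabels (p ::ₘ Γ) ↔ p.1 = l ∨ l ∈ lfLabels Γ := by
  constructor
  · rintro ⟨b, hb, rfl⟩
    rcases Multiset.mem_cons.mp hb with rfl | hb
    · exact Or.inl rfl
    · exact Or.inr ⟨b, hb, rfl⟩
  · rintro (h | ⟨b, hb, rfl⟩)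
    · exact ⟨p, Multiset.mem_cons_self _ _, h⟩
    · exact ⟨b, Multiset.mem_cons_of_mem hb, rfl⟩

lemma subL_ne {a b l : ℕ} (h : l ≠ a) : subL a b l = l := if_neg h

@[simp] lemma subL_same (a b : ℕ) : subL a b a = b := if_pos rfl

lemma subL_cases (a b l : ℕ) : subL a b l = b ∨ subL a b l = l := by
  unfold subL; split <;> simp

@[simp] lemma subR_zero {C : Type} (a b : ℕ) : subR a b (0 : Multiset (Rel C)) = 0 := rfl

@[simp] lemma subR_cons {C : Type} (a b : ℕ) (c : Rel C) (R : Multiset (Rel C)) :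
    subR a b (c ::ₘ R) = (subL a b c.1, c.2.1, subL a b c.2.2) ::ₘ subR a b R :=
  Multiset.map_cons _ _ _

@[simp] lemma subR_add {C : Type} (a b : ℕ) (R S : Multiset (Rel C)) :
    subR a b (R + S) = subR a b R + subR a b S := Multiset.map_add _ _ _

@[simp] lemma subG_cons {C : Type} (a b : ℕ) (p : LF C) (Γ : Multiset (LF C)) :
    subG a b (p ::ₘ Γ) = (subL a b p.1, p.2) ::ₘ subG a b Γ :=
  Multiset.map_cons _ _ _

lemma subR_eq_self {C : Type} {R : Multiset (Rel C)} {e b : ℕ}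
    (h : e ∉ relLabels R) : subR e b R = R := by
  have h' : ∀ c ∈ R, (subL e b c.1, c.2.1, subL e b c.2.2) = c := by
    intro c hc
    have h1 : c.1 ≠ e := fun he => h ⟨c, hc, Or.inl he⟩
    have h2 : c.2.2 ≠ e := fun he => h ⟨c, hc, Or.inr he⟩
    simp [subL, h1, h2]
  calc subR e b R = R.map id := Multiset.map_congr rfl h'
  _ = R := Multiset.map_id R

lemma subG_eq_self {C : Type} {Γ : Multiset (LF C)} {e b : ℕ}
    (h : e ∉ lfLabels Γ) : subG e b Γ = Γ := by
  have h' : ∀ c ∈ Γ, (subL e b c.1, c.2) = c := by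
    intro c hc
    have h1 : c.1 ≠ e := fun he => h ⟨c, hc, he⟩
    simp [subL, h1]
  calc subG e b Γ = Γ.map id := Multiset.map_congr rfl h'
  _ = Γ := Multiset.map_id Γ

lemma relLabels_subR {C : Type} {R : Multiset (Rel C)} {a b l : ℕ}
    (h : l ∈ relLabels (subR a b R)) : l = b ∨ l ∈ relLabels R := by
  obtain ⟨c, hc, hl⟩ := h
  obtain ⟨d, hd, rfl⟩ := Multiset.mem_map.mp hc
  rcases hl with hl | hl <;> simp only at hl
  · rcases subL_cases a b d.1 with h' | h'
    · rw [h'] at hl; exact Or.inl hl.symm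
    · rw [h'] at hl; exact Or.inr ⟨d, hd, Or.inl hl⟩
  · rcases subL_cases a b d.2.2 with h' | h'
    · rw [h'] at hl; exact Or.inl hl.symm
    · rw [h'] at hl; exact Or.inr ⟨d, hd, Or.inr hl⟩

lemma lfLabels_subG {C : Type} {Γ : Multiset (LF C)} {a b l : ℕ}
    (h : l ∈ lfLabels (subG a b Γ)) : l = b ∨ l ∈ lfLabels Γ := by
  obtain ⟨c, hc, hl⟩ := h
  obtain ⟨d, hd, rfl⟩ := Multiset.mem_map.mp hc
  simp only at hl
  rcases subL_cases a b d.1 with h' | h'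
  · rw [h'] at hl; exact Or.inl hl.symm
  · rw [h'] at hl; exact Or.inr ⟨d, hd, hl⟩

lemma Chain.sub {C : Type} {s : List C} {w u : ℕ} {m : Multiset (Rel C)}
    (h : Chain s w u m) (a b : ℕ) :
    Chain s (subL a b w) (subL a b u) (subR a b m) := by
  induction h with
  | nil w => exact Chain.nil _
  | cons h ih => rw [subR_cons]; exact Chain.cons ih

end DeletionAux

section DeletionAux2

variable {α : Alphabet} {𝒜 : Set (Ax α.Char)}

lemma rmax_add {C : Type} (R S : Multiset (Rel C)) : rmax (R + S) = rmax R + rmax S := by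
  simp [rmax]

lemma add_cons' {C : Type} (s t : Multiset C) (a : C) :
    s + (a ::ₘ t) = a ::ₘ (s + t) := by
  rw [add_comm s (a ::ₘ t), Multiset.cons_add, add_comm t s]

/-- Height-preserving admissibility of label substitution in `L_Σ(𝒜)`. -/
theorem subst_LD : ∀ (n : ℕ) {R : Multiset (Rel α.Char)} {Γ : Multiset (LF α.Char)}
    {w : ℕ} {A : Formula α.Char}, LD α 𝒜 n R Γ w A → ∀ a b : ℕ,
    LD α 𝒜 n (subR a b R) (subG a b Γ) (subL a b w) A := by
  intro n
  induction n using Nat.strong_induction_on with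
  | _ n IH =>
  intro R Γ w A h a b
  cases h with
  | id n R Γ w p =>
    rw [subG_cons]; exact LD.id n _ _ _ p
  | botL n R Γ w u A =>
    rw [subG_cons]; exact LD.botL n _ _ _ _ _
  | orL h1 h2 =>
    have g1 := IH _ (Nat.lt_succ_self _) h1 a b
    have g2 := IH _ (Nat.lt_succ_self _) h2 a b
    rw [subG_cons] at g1 g2 ⊢
    exact LD.orL g1 g2
  | orR1 h1 =>
    exact LD.orR1 (IH _ (Nat.lt_succ_self _) h1 a b)
  | orR2 h1 =>
    exact LD.orR2 (IH _ (Nat.lt_succ_self _) h1 a b)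
  | andL h1 =>
    have g1 := IH _ (Nat.lt_succ_self _) h1 a b
    rw [subG_cons, subG_cons] at g1
    rw [subG_cons]
    exact LD.andL g1
  | andR h1 h2 =>
    exact LD.andR (IH _ (Nat.lt_succ_self _) h1 a b) (IH _ (Nat.lt_succ_self _) h2 a b)
  | impL h1 h2 =>
    have g1 := IH _ (Nat.lt_succ_self _) h1 a b
    have g2 := IH _ (Nat.lt_succ_self _) h2 a b
    rw [subG_cons] at g1 g2 ⊢
    exact LD.impL g1 g2
  | impR h1 =>
    have g1 := IH _ (Nat.lt_succ_self _) h1 a b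
    rw [subG_cons] at g1
    exact LD.impR g1
  | diaL hf h1 =>
    rename_i n' Γ' w' u' x' A'
    obtain ⟨hfR, hfG, hfv⟩ := hf
    have hwu : w' ≠ u' := fun hh => hfG (lfLabels_cons.mpr (Or.inl hh))
    have hGu : u' ∉ lfLabels Γ' := fun hh => hfG (lfLabels_cons.mpr (Or.inr hh))
    set e' := rmax R + gmax Γ' + w' + w + a + b + 1 with he'
    have he'a : e' ≠ a := by omega
    have g1 := IH _ (Nat.lt_succ_self _) h1 u' e'
    simp only [subR_cons, subG_cons, subL_same, subL_ne hwu, subL_ne (Ne.symm hfv),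
      subR_eq_self hfR, subG_eq_self hGu] at g1
    have g2 := IH _ (Nat.lt_succ_self _) g1 a b
    simp only [subR_cons, subG_cons, subL_ne he'a] at g2
    have hfresh : freshIn e' (subR a b R)
        ((subL a b w', Formula.dia x' A') ::ₘ subG a b Γ') (subL a b w) := by
      refine ⟨?_, ?_, ?_⟩
      · intro hm
        rcases relLabels_subR hm with h' | h'
        · omega
        · have := relLabels_bound h'; omega
      · intro hm
        rcases lfLabels_cons.mp hm with h' | h'
        · have h'2 : subL a b w' = e' := h'
          rcases subL_cases a b w' with h'' | h'' <;> rw [h''] at h'2 <;> omega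
        · rcases lfLabels_subG h' with h'' | h''
          · omega
          · have := lfLabels_bound h''; omega
      · rcases subL_cases a b w with h'' | h'' <;> omega
    rw [subG_cons]
    exact LD.diaL hfresh g2
  | diaR h1 =>
    have g1 := IH _ (Nat.lt_succ_self _) h1 a b
    rw [subR_cons] at g1 ⊢
    exact LD.diaR g1
  | boxR hf h1 =>
    rename_i n' u' x' A'
    obtain ⟨hfR, hfG, hfw⟩ := hf
    have hwu : w ≠ u' := Ne.symm hfw
    set e' := rmax R + gmax Γ + w + a + b + 1 with he'
    have he'a : e' ≠ a := by omega
    have g1 := IH _ (Nat.lt_succ_self _) h1 u' e'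
    simp only [subR_cons, subL_same, subL_ne hwu,
      subR_eq_self hfR, subG_eq_self hfG] at g1
    have g2 := IH _ (Nat.lt_succ_self _) g1 a b
    simp only [subR_cons, subL_ne he'a] at g2
    have hfresh : freshIn e' (subR a b R) (subG a b Γ) (subL a b w) := by
      refine ⟨?_, ?_, ?_⟩
      · intro hm
        rcases relLabels_subR hm with h' | h'
        · omega
        · have := relLabels_bound h'; omega
      · intro hm
        rcases lfLabels_subG hm with h'' | h''
        · omega
        · have := lfLabels_bound h''; omega
      · rcases subL_cases a b w with h'' | h'' <;> omega
    exact LD.boxR hfresh g2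
  | boxL h1 =>
    have g1 := IH _ (Nat.lt_succ_self _) h1 a b
    rw [subR_cons] at g1 ⊢
    rw [subG_cons, subG_cons] at g1
    rw [subG_cons]
    exact LD.boxL g1
  | dx w0 hax hf h1 =>
    rename_i n' u' x'
    obtain ⟨hfR, hfG, hfv⟩ := hf
    set e' := rmax R + gmax Γ + w + a + b + 1 with he'
    have he'a : e' ≠ a := by omega
    have g1 := IH _ (Nat.lt_succ_self _) h1 u' e'
    simp only [subR_cons, subL_same, subL_ne (Ne.symm hfv),
      subR_eq_self hfR, subG_eq_self hfG] at g1
    have g2 := IH _ (Nat.lt_succ_self _) g1 a b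
    simp only [subR_cons, subL_ne he'a] at g2
    have hfresh : freshIn e' (subR a b R) (subG a b Γ) (subL a b w) := by
      refine ⟨?_, ?_, ?_⟩
      · intro hm
        rcases relLabels_subR hm with h' | h'
        · omega
        · have := relLabels_bound h'; omega
      · intro hm
        rcases lfLabels_subG hm with h'' | h''
        · omega
        · have := lfLabels_bound h''; omega
      · rcases subL_cases a b w with h'' | h'' <;> omega
    exact LD.dx _ hax hfresh g2
  | isx hax hc h1 =>
    have g1 := IH _ (Nat.lt_succ_self _) h1 a b
    rw [subR_cons, subR_add] at g1
    rw [subR_add]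
    exact LD.isx hax (hc.sub a b) g1
  | cx h1 =>
    have g1 := IH _ (Nat.lt_succ_self _) h1 a b
    rw [subR_cons, subR_cons] at g1
    rw [subR_cons]
    exact LD.cx g1

/-- Height-preserving admissibility of relational weakening in `L_Σ(𝒜)`. -/
theorem weak_LD : ∀ (n : ℕ) {R : Multiset (Rel α.Char)} {Γ : Multiset (LF α.Char)}
    {w : ℕ} {A : Formula α.Char}, LD α 𝒜 n R Γ w A → ∀ R₀ : Multiset (Rel α.Char),
    LD α 𝒜 n (R₀ + R) Γ w A := by
  intro n
  induction n using Nat.strong_induction_on with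
  | _ n IH =>
  intro R Γ w A h R₀
  cases h with
  | id n R Γ w p => exact LD.id n _ _ _ p
  | botL n R Γ w u A => exact LD.botL n _ _ _ _ _
  | orL h1 h2 =>
    exact LD.orL (IH _ (Nat.lt_succ_self _) h1 R₀) (IH _ (Nat.lt_succ_self _) h2 R₀)
  | orR1 h1 => exact LD.orR1 (IH _ (Nat.lt_succ_self _) h1 R₀)
  | orR2 h1 => exact LD.orR2 (IH _ (Nat.lt_succ_self _) h1 R₀)
  | andL h1 => exact LD.andL (IH _ (Nat.lt_succ_self _) h1 R₀)
  | andR h1 h2 =>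
    exact LD.andR (IH _ (Nat.lt_succ_self _) h1 R₀) (IH _ (Nat.lt_succ_self _) h2 R₀)
  | impL h1 h2 =>
    exact LD.impL (IH _ (Nat.lt_succ_self _) h1 R₀) (IH _ (Nat.lt_succ_self _) h2 R₀)
  | impR h1 => exact LD.impR (IH _ (Nat.lt_succ_self _) h1 R₀)
  | diaL hf h1 =>
    rename_i n' Γ' w' u' x' A'
    obtain ⟨hfR, hfG, hfv⟩ := hf
    have hwu : w' ≠ u' := fun hh => hfG (lfLabels_cons.mpr (Or.inl hh))
    have hGu : u' ∉ lfLabels Γ' := fun hh => hfG (lfLabels_cons.mpr (Or.inr hh))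
    set e' := rmax R₀ + rmax R + gmax Γ' + w' + w + 1 with he'
    have g1 := subst_LD _ h1 u' e'
    simp only [subR_cons, subG_cons, subL_same, subL_ne hwu, subL_ne (Ne.symm hfv),
      subR_eq_self hfR, subG_eq_self hGu] at g1
    have g2 := IH _ (Nat.lt_succ_self _) g1 R₀
    rw [add_cons'] at g2
    have hfresh : freshIn e' (R₀ + R) ((w', Formula.dia x' A') ::ₘ Γ') w := by
      refine ⟨?_, ?_, ?_⟩
      · intro hm
        have := relLabels_bound hm; rw [rmax_add] at this; omega
      · intro hm
        rcases lfLabels_cons.mp hm with h' | h'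
        · have h'2 : w' = e' := h'; omega
        · have := lfLabels_bound h'; omega
      · omega
    exact LD.diaL hfresh g2
  | diaR h1 =>
    have g1 := IH _ (Nat.lt_succ_self _) h1 R₀
    rw [add_cons'] at g1
    rw [add_cons']
    exact LD.diaR g1
  | boxR hf h1 =>
    rename_i n' u' x' A'
    obtain ⟨hfR, hfG, hfw⟩ := hf
    have hwu : w ≠ u' := Ne.symm hfw
    set e' := rmax R₀ + rmax R + gmax Γ + w + 1 with he'
    have g1 := subst_LD _ h1 u' e'
    simp only [subR_cons, subL_same, subL_ne hwu,
      subR_eq_self hfR, subG_eq_self hfG] at g1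
    have g2 := IH _ (Nat.lt_succ_self _) g1 R₀
    rw [add_cons'] at g2
    have hfresh : freshIn e' (R₀ + R) Γ w := by
      refine ⟨?_, ?_, ?_⟩
      · intro hm
        have := relLabels_bound hm; rw [rmax_add] at this; omega
      · intro hm
        have := lfLabels_bound hm; omega
      · omega
    exact LD.boxR hfresh g2
  | boxL h1 =>
    have g1 := IH _ (Nat.lt_succ_self _) h1 R₀
    rw [add_cons'] at g1
    rw [add_cons']
    exact LD.boxL g1
  | dx w0 hax hf h1 =>
    rename_i n' u' x'
    obtain ⟨hfR, hfG, hfv⟩ := hf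
    set e' := rmax R₀ + rmax R + gmax Γ + w + 1 with he'
    have g1 := subst_LD _ h1 u' e'
    simp only [subR_cons, subL_same, subL_ne (Ne.symm hfv),
      subR_eq_self hfR, subG_eq_self hfG] at g1
    have g2 := IH _ (Nat.lt_succ_self _) g1 R₀
    rw [add_cons'] at g2
    have hfresh : freshIn e' (R₀ + R) Γ w := by
      refine ⟨?_, ?_, ?_⟩
      · intro hm
        have := relLabels_bound hm; rw [rmax_add] at this; omega
      · intro hm
        have := lfLabels_bound hm; omega
      · omega
    exact LD.dx _ hax hfresh g2
  | isx hax hc h1 =>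
    rename_i n' R' w' u' s' x' m'
    have g1 := IH _ (Nat.lt_succ_self _) h1 R₀
    rw [add_cons'] at g1
    have e1 : R₀ + (m' + R') = m' + (R₀ + R') := add_left_comm R₀ m' R'
    rw [e1] at g1 ⊢
    exact LD.isx hax hc g1
  | cx h1 =>
    have g1 := IH _ (Nat.lt_succ_self _) h1 R₀
    rw [add_cons', add_cons'] at g1
    rw [add_cons']
    exact LD.cx g1

end DeletionAux2

section DeletionAux3

variable {α : Alphabet} {𝒜 : Set (Ax α.Char)}

/-- Weakening for `LDeriv`. -/
lemma LDeriv.weak {R : Multiset (Rel α.Char)} {Γ : Multiset (LF α.Char)}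
    {w : ℕ} {A : Formula α.Char} (h : LDeriv α 𝒜 R Γ w A)
    (R₀ : Multiset (Rel α.Char)) : LDeriv α 𝒜 (R₀ + R) Γ w A := by
  obtain ⟨n, h⟩ := h
  exact ⟨n, weak_LD n h R₀⟩

/-- Deletion of a single relational atom present (possibly reversed) in the
remaining relational context. -/
lemma del_one {R : Multiset (Rel α.Char)} {c d : ℕ} {y : α.Char}
    (hE : PGEdge α R c y d) :
    ∀ {Γ : Multiset (LF α.Char)} {w : ℕ} {A : Formula α.Char},
      LDeriv α 𝒜 ((c, y, d) ::ₘ R) Γ w A → LDeriv α 𝒜 R Γ w A := by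
  intro Γ w A h
  rcases hE with hm | hm
  · -- (c, y, d) ∈ R : duplicate, remove via weakening + two (cx)
    obtain ⟨R₀, rfl⟩ := Multiset.exists_cons_of_mem hm
    have h1 := h.weak {(d, α.conv y, c)}
    rw [Multiset.singleton_add] at h1
    obtain ⟨n, h1⟩ := h1
    -- h1 : LD n ((d, conv y, c) ::ₘ (c,y,d) ::ₘ (c,y,d) ::ₘ R₀)
    have h2 : LD α 𝒜 n ((d, α.conv y, c) ::ₘ (c, α.conv (α.conv y), d) ::ₘ
        ((c, y, d) ::ₘ R₀)) Γ w A := by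
      rw [α.conv_conv]
      exact h1
    have h3 := LD.cx h2
    -- h3 : LD (n+1) ((d, conv y, c) ::ₘ (c, y, d) ::ₘ R₀)
    rw [Multiset.cons_swap] at h3
    exact ⟨n + 2, LD.cx h3⟩
  · -- (d, conv y, c) ∈ R : remove via (cx)
    obtain ⟨R₀, rfl⟩ := Multiset.exists_cons_of_mem hm
    obtain ⟨n, h1⟩ := h
    have h2 : LD α 𝒜 n ((d, α.conv y, c) ::ₘ (c, α.conv (α.conv y), d) ::ₘ R₀) Γ w A := by
      rw [α.conv_conv, Multiset.cons_swap]
      exact h1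
    exact ⟨n + 1, LD.cx h2⟩

/-- Deletion of a multiset of relational atoms each present (possibly reversed)
in the remaining relational context. -/
lemma del_multi : ∀ (m : Multiset (Rel α.Char)) {R : Multiset (Rel α.Char)},
    (∀ a ∈ m, PGEdge α R a.1 a.2.1 a.2.2) →
    ∀ {Γ : Multiset (LF α.Char)} {w : ℕ} {A : Formula α.Char},
      LDeriv α 𝒜 (m + R) Γ w A → LDeriv α 𝒜 R Γ w A := by
  intro m
  induction m using Multiset.induction with
  | empty => intro R _ Γ w A h; rwa [zero_add] at h
  | cons a m ih =>
    intro R hmem Γ w A h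
    rw [Multiset.cons_add] at h
    have hE : PGEdge α (m + R) a.1 a.2.1 a.2.2 := by
      rcases hmem a (Multiset.mem_cons_self a m) with h' | h'
      · exact Or.inl (Multiset.mem_add.mpr (Or.inr h'))
      · exact Or.inr (Multiset.mem_add.mpr (Or.inr h'))
    have h1 : LDeriv α 𝒜 (m + R) Γ w A := del_one hE h
    exact ih (fun b hb => hmem b (Multiset.mem_cons_of_mem hb)) h1

lemma Chain.append {C : Type} : ∀ {s₁ s₂ : List C} {a c b : ℕ}
    {m₁ m₂ : Multiset (Rel C)}, Chain s₁ a c m₁ → Chain s₂ c b m₂ →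
    Chain (s₁ ++ s₂) a b (m₁ + m₂) := by
  intro s₁ s₂ a c b m₁ m₂ h1 h2
  induction h1 with
  | nil w => rwa [zero_add, List.nil_append]
  | cons h ih => rw [Multiset.cons_add]; exact Chain.cons (ih h2)

lemma Chain.split {C : Type} : ∀ (s₁ : List C) {s₂ : List C} {a b : ℕ}
    {m : Multiset (Rel C)}, Chain (s₁ ++ s₂) a b m →
    ∃ c m₁ m₂, Chain s₁ a c m₁ ∧ Chain s₂ c b m₂ ∧ m = m₁ + m₂ := by
  intro s₁
  induction s₁ with
  | nil =>
    intro s₂ a b m h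
    exact ⟨a, 0, m, Chain.nil a, h, (zero_add m).symm⟩
  | cons x s₁ ih =>
    intro s₂ a b m h
    rw [List.cons_append] at h
    cases h with
    | cons h0 =>
      rename_i v m₀
      obtain ⟨c, m₁, m₂, hc1, hc2, rfl⟩ := ih h0
      exact ⟨c, (a, x, v) ::ₘ m₁, m₂, Chain.cons hc1, hc2, (Multiset.cons_add _ _ _).symm⟩

/-- The converse of a multiset of relational atoms. -/
def mconv {C : Type} (cv : C → C) (m : Multiset (Rel C)) : Multiset (Rel C) :=
  m.map (fun a => (a.2.2, cv a.2.1, a.1))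

lemma Chain.conv {C : Type} (cv : C → C) : ∀ {s : List C} {a b : ℕ}
    {m : Multiset (Rel C)}, Chain s a b m → Chain (convStr cv s) b a (mconv cv m) := by
  intro s a b m h
  induction h with
  | nil w => exact Chain.nil w
  | @cons x s w v u m h ih =>
    have h1 : Chain [cv x] v w ((v, cv x, w) ::ₘ 0) := Chain.cons (Chain.nil w)
    have h2 := ih.append h1
    have e1 : convStr cv s ++ [cv x] = convStr cv (x :: s) := by
      simp [convStr]
    have e2 : mconv cv m + ((v, cv x, w) ::ₘ 0) = mconv cv ((w, x, v) ::ₘ m) := by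
      simp only [mconv, Multiset.map_cons]
      rw [add_cons', add_zero]
    rwa [e1, e2] at h2

lemma convStr_convStr {C : Type} {cv : C → C} (hcv : ∀ x, cv (cv x) = x)
    (s : List C) : convStr cv (convStr cv s) = s := by
  simp only [convStr, List.map_reverse, List.reverse_reverse, List.map_map]
  have : cv ∘ cv = id := funext hcv
  rw [this, List.map_id]

/-- Every propagation path gives rise to a chain of atoms, each present
(possibly reversed) in `R`. -/
lemma ppath_chain {R : Multiset (Rel α.Char)} : ∀ {a b : ℕ} {s : List α.Char},
    PPath α R a b s → ∃ m, Chain s a b m ∧ ∀ e ∈ m, PGEdge α R e.1 e.2.1 e.2.2 := by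
  intro a b s h
  induction h with
  | nil w => exact ⟨0, Chain.nil w, by simp⟩
  | @cons w v u x s hE hp ih =>
    obtain ⟨m, hc, hm⟩ := ih
    refine ⟨(w, x, v) ::ₘ m, Chain.cons hc, ?_⟩
    intro e he
    rcases Multiset.mem_cons.mp he with rfl | he
    · exact hE
    · exact hm e he

end DeletionAux3

section DeletionAux4

variable {α : Alphabet} {𝒜 : Set (Ax α.Char)}

/-- One grammar step in reverse: a removable chain for the target string gives
a removable chain for the source string. -/
lemma step_rem {R : Multiset (Rel α.Char)} {u v : ℕ} {z c : List α.Char}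
    (hst : Step (Gram α 𝒜) z c)
    (hc : ∃ m, Chain c u v m ∧ ∀ (Γ : Multiset (LF α.Char)) (w : ℕ)
      (A : Formula α.Char), LDeriv α 𝒜 (m + R) Γ w A → LDeriv α 𝒜 R Γ w A) :
    ∃ m, Chain z u v m ∧ ∀ (Γ : Multiset (LF α.Char)) (w : ℕ)
      (A : Formula α.Char), LDeriv α 𝒜 (m + R) Γ w A → LDeriv α 𝒜 R Γ w A := by
  obtain ⟨s₁, s₂, y, r, hg, rfl, rfl⟩ := hst
  obtain ⟨m, hchain, hdel⟩ := hc
  obtain ⟨c₂, mA, m₃, hA, h₃, rfl⟩ := Chain.split (s₁ ++ r) hchain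
  obtain ⟨c₁, m₁, m₂, h₁, h₂, rfl⟩ := Chain.split s₁ hA
  refine ⟨m₁ + ((c₁, y, c₂) ::ₘ m₃), ?_, ?_⟩
  · have := h₁.append (Chain.cons h₃ : Chain (y :: s₂) c₁ v ((c₁, y, c₂) ::ₘ m₃))
    exact this
  intro Γ w A hD
  rcases hg with hax | ⟨x₀, s₀, hax, hy, hr⟩
  · -- forward production `y ⟶ r`
    obtain ⟨n, hw⟩ := hD.weak m₂
    have e1 : m₂ + (m₁ + ((c₁, y, c₂) ::ₘ m₃) + R)
        = (c₁, y, c₂) ::ₘ (m₂ + (m₁ + (m₃ + R))) := by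
      simp only [← Multiset.singleton_add]; abel
    rw [e1] at hw
    have h5 := LD.isx hax h₂ hw
    have e2 : m₂ + (m₁ + (m₃ + R)) = (m₁ + m₂ + m₃) + R := by abel
    rw [e2] at h5
    exact hdel Γ w A ⟨_, h5⟩
  · -- converse production `x̄₀ ⟶ s̄₀`
    subst hy hr
    have hcc : Chain s₀ c₂ c₁ (mconv α.conv m₂) := by
      have h' := Chain.conv α.conv h₂
      rwa [convStr_convStr α.conv_conv] at h'
    obtain ⟨n, hw⟩ := hD.weak ((c₂, x₀, c₁) ::ₘ mconv α.conv m₂)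
    have e1 : ((c₂, x₀, c₁) ::ₘ mconv α.conv m₂)
          + (m₁ + ((c₁, α.conv x₀, c₂) ::ₘ m₃) + R)
        = (c₂, x₀, c₁) ::ₘ (c₁, α.conv x₀, c₂) ::ₘ
            (mconv α.conv m₂ + (m₁ + (m₃ + R))) := by
      simp only [← Multiset.singleton_add]; abel
    rw [e1] at hw
    have h5 := LD.cx hw
    have h6 := LD.isx hax hcc h5
    have h7 := weak_LD _ h6 m₂
    have e2 : m₂ + (mconv α.conv m₂ + (m₁ + (m₃ + R)))
        = mconv α.conv m₂ + ((m₁ + m₂ + m₃) + R) := by abel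
    rw [e2] at h7
    have hmemb : ∀ a ∈ mconv α.conv m₂,
        PGEdge α ((m₁ + m₂ + m₃) + R) a.1 a.2.1 a.2.2 := by
      intro a ha
      obtain ⟨b, hb, rfl⟩ := Multiset.mem_map.mp ha
      refine Or.inr ?_
      show (b.1, α.conv (α.conv b.2.1), b.2.2) ∈ _
      rw [α.conv_conv]
      exact Multiset.mem_add.mpr (Or.inl (Multiset.mem_add.mpr
        (Or.inl (Multiset.mem_add.mpr (Or.inr hb)))))
    have h8 := del_multi (mconv α.conv m₂) hmemb ⟨_, h7⟩
    exact hdel Γ w A h8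

end DeletionAux4

/-- **Deletion of grammar-redundant relational atoms**: if `R, uR_xv, Γ ⊢ w : A`
is derivable in `L_Σ(𝒜)` and there is a propagation path `π(u,v)` in `PG(R)`
with `s_π(u,v) ∈ L_{g(𝒜)}(x)`, then `R, Γ ⊢ w : A` is derivable in `L_Σ(𝒜)`. -/
theorem delete_redundant_atom (α : Alphabet) (𝒜 : Set (Ax α.Char))
    (R : Multiset (Rel α.Char)) (Γ : Multiset (LF α.Char)) (u v w : ℕ)
    (x : α.Char) (A : Formula α.Char)
    (h1 : LDeriv α 𝒜 ((u, x, v) ::ₘ R) Γ w A)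
    (h2 : CanProp α 𝒜 R u v x) :
    LDeriv α 𝒜 R Γ w A := by
  obtain ⟨s, hp, hl⟩ := h2
  have base : ∃ m, Chain s u v m ∧ ∀ (Γ : Multiset (LF α.Char)) (w : ℕ)
      (A : Formula α.Char), LDeriv α 𝒜 (m + R) Γ w A → LDeriv α 𝒜 R Γ w A := by
    obtain ⟨m, hc, hm⟩ := ppath_chain hp
    exact ⟨m, hc, fun Γ w A h => del_multi m hm h⟩
  have key : ∃ m, Chain [x] u v m ∧ ∀ (Γ : Multiset (LF α.Char)) (w : ℕ)
      (A : Formula α.Char), LDeriv α 𝒜 (m + R) Γ w A → LDeriv α 𝒜 R Γ w A :=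
    Relation.ReflTransGen.head_induction_on
      (motive := fun z _ => ∃ m, Chain z u v m ∧ ∀ (Γ : Multiset (LF α.Char)) (w : ℕ)
        (A : Formula α.Char), LDeriv α 𝒜 (m + R) Γ w A → LDeriv α 𝒜 R Γ w A)
      hl base (fun hstep _ ih => step_rem hstep ih)
  obtain ⟨m, hc, hdel⟩ := key
  cases hc with
  | cons h0 =>
    cases h0 with
    | nil =>
      apply hdel Γ w A
      rw [Multiset.cons_add, zero_add]
      exact h1

end IGL
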